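/- For β ∈ (0,1) and r > 0, the Caputo derivative of e^{rs} converges to r e^{rs} as β → 1⁻ in the sense that r^β · γ(1−β, rs)/Γ(1−β) → r as β → 1⁻ for fixed s > 0. -/

import Mathlib

open Real Set Filter MeasureTheory

lemma gamma_tendsto_atTop : Tendsto Real.Gamma (nhdsWithin 0 (Set.Ioi 0)) atTop := by
  have hcont : ContinuousAt (fun a : ℝ => Real.Gamma (a + 1)) 0 := by
    have h1 : ContinuousAt Real.Gamma 1 := by
      refine (Real.differentiableAt_Gamma ?_).continuousAt
      intro m h
      have hm : (0:ℝ) ≤ m := Nat.cast_nonneg m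
      linarith [h]
    have h2 : ContinuousAt (fun a : ℝ => a + 1) 0 := by fun_prop
    have h1' : ContinuousAt Real.Gamma ((0:ℝ) + 1) := by rw [zero_add]; exact h1
    exact ContinuousAt.comp (g := Real.Gamma) (f := fun a : ℝ => a + 1) (x := (0:ℝ)) h1' h2
  have h1 : Tendsto (fun a : ℝ => Real.Gamma (a + 1)) (nhdsWithin 0 (Set.Ioi 0)) (nhds 1) := by
    have := hcont.tendsto
    simp only [zero_add, Real.Gamma_one] at this
    exact this.mono_left nhdsWithin_le_nhds
  have hinv : Tendsto (fun a : ℝ => a⁻¹) (nhdsWithin 0 (Set.Ioi 0)) atTop :=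
    tendsto_inv_nhdsGT_zero
  have hmul := h1.pos_mul_atTop one_pos hinv
  refine hmul.congr' ?_
  filter_upwards [self_mem_nhdsWithin] with a (ha : 0 < a)
  rw [Real.Gamma_add_one ha.ne']
  field_simp

lemma ratio_tendsto (x : ℝ) (hx : 0 < x) :
    Tendsto (fun a : ℝ => (∫ t in (0:ℝ)..x, t ^ (a - 1) * Real.exp (-t)) / Real.Gamma a)
      (nhdsWithin 0 (Set.Ioi 0)) (nhds 1) := by
  set C : ℝ := max x⁻¹ 1 with hC
  set U : ℝ → ℝ := fun a => ∫ t in Set.Ioi x, Real.exp (-t) * t ^ (a - 1) with hU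
  have Iexp : IntegrableOn (fun t : ℝ => Real.exp (-t)) (Set.Ioi x) := by
    have := exp_neg_integrableOn_Ioi x (one_pos (α := ℝ))
    exact this.congr_fun (fun t _ => by simp only [neg_one_mul]) measurableSet_Ioi
  -- splitting
  have hsplit : ∀ a : ℝ, 0 < a →
      (∫ t in (0:ℝ)..x, t ^ (a - 1) * Real.exp (-t)) = Real.Gamma a - U a := by
    intro a ha
    have hint := Real.GammaIntegral_convergent ha
    have h1 : IntegrableOn (fun t : ℝ => Real.exp (-t) * t ^ (a - 1)) (Set.Ioc 0 x) :=
      hint.mono_set Set.Ioc_subset_Ioi_self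
    have h2 : IntegrableOn (fun t : ℝ => Real.exp (-t) * t ^ (a - 1)) (Set.Ioi x) :=
      hint.mono_set (Set.Ioi_subset_Ioi hx.le)
    have hunion : Set.Ioc 0 x ∪ Set.Ioi x = Set.Ioi (0:ℝ) := Set.Ioc_union_Ioi_eq_Ioi hx.le
    have key : Real.Gamma a = (∫ t in Set.Ioc 0 x, Real.exp (-t) * t ^ (a - 1)) + U a := by
      rw [Real.Gamma_eq_integral ha, ← hunion,
        MeasureTheory.setIntegral_union (Set.Ioc_disjoint_Ioi le_rfl)
          measurableSet_Ioi h1 h2]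
    have hcomm : (∫ t in Set.Ioc (0:ℝ) x, t ^ (a - 1) * Real.exp (-t))
        = ∫ t in Set.Ioc (0:ℝ) x, Real.exp (-t) * t ^ (a - 1) := by
      simp only [mul_comm]
    rw [intervalIntegral.integral_of_le hx.le, hcomm, key]
    ring
  -- bound on U
  have hUbound : ∀ a : ℝ, 0 < a → a < 1 → U a ≤ C * Real.exp (-x) := by
    intro a ha ha1
    have hint : IntegrableOn (fun t : ℝ => Real.exp (-t) * t ^ (a - 1)) (Set.Ioi x) :=
      (Real.GammaIntegral_convergent ha).mono_set (Set.Ioi_subset_Ioi hx.le)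
    have hmono : ∀ t ∈ Set.Ioi x, Real.exp (-t) * t ^ (a - 1) ≤ C * Real.exp (-t) := by
      intro t ht
      have ht' : x < t := ht
      have hbd : t ^ (a - 1) ≤ C := by
        have h1 : t ^ (a - 1) ≤ x ^ (a - 1) :=
          Real.rpow_le_rpow_of_nonpos hx ht'.le (by linarith)
        refine h1.trans ?_
        rcases le_or_gt 1 x with hx1 | hx1
        · have : x ^ (a - 1) ≤ x ^ (0:ℝ) :=
            Real.rpow_le_rpow_of_exponent_le hx1 (by linarith)
          rw [Real.rpow_zero] at this
          exact this.trans (le_max_right _ _)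
        · have : x ^ (a - 1) ≤ x ^ (-1 : ℝ) :=
            Real.rpow_le_rpow_of_exponent_ge hx hx1.le (by linarith)
          rw [Real.rpow_neg_one] at this
          exact this.trans (le_max_left _ _)
      calc Real.exp (-t) * t ^ (a - 1) ≤ Real.exp (-t) * C := by
            exact mul_le_mul_of_nonneg_left hbd (Real.exp_pos _).le
        _ = C * Real.exp (-t) := mul_comm _ _
    have := MeasureTheory.setIntegral_mono_on hint (Iexp.const_mul C)
      measurableSet_Ioi hmono
    calc U a ≤ ∫ t in Set.Ioi x, C * Real.exp (-t) := this
      _ = C * Real.exp (-x) := by rw [MeasureTheory.integral_const_mul, integral_exp_neg_Ioi]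
  have hUnonneg : ∀ a : ℝ, 0 < a → 0 ≤ U a := by
    intro a ha
    apply MeasureTheory.setIntegral_nonneg measurableSet_Ioi
    intro t ht
    exact mul_nonneg (Real.exp_pos _).le (Real.rpow_nonneg (le_trans hx.le (le_of_lt ht)) _)
  -- U/Γ → 0
  have hΓ := gamma_tendsto_atTop
  have hdiv : Tendsto (fun a : ℝ => U a / Real.Gamma a) (nhdsWithin 0 (Set.Ioi 0)) (nhds 0) := by
    have hub : Tendsto (fun a : ℝ => C * Real.exp (-x) / Real.Gamma a)
        (nhdsWithin 0 (Set.Ioi 0)) (nhds 0) := tendsto_const_nhds.div_atTop hΓ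
    have hev1 : ∀ᶠ a in nhdsWithin (0:ℝ) (Set.Ioi 0), 0 ≤ U a / Real.Gamma a := by
      filter_upwards [self_mem_nhdsWithin] with a (ha : 0 < a)
      exact div_nonneg (hUnonneg a ha) (Real.Gamma_pos_of_pos ha).le
    have hev2 : ∀ᶠ a in nhdsWithin (0:ℝ) (Set.Ioi 0),
        U a / Real.Gamma a ≤ C * Real.exp (-x) / Real.Gamma a := by
      have hIoo : Set.Ioo (0:ℝ) 1 ∈ nhdsWithin (0:ℝ) (Set.Ioi 0) := by
        apply inter_mem_nhdsWithin
        exact Iio_mem_nhds one_pos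
      filter_upwards [hIoo] with a ha
      have hΓpos := Real.Gamma_pos_of_pos ha.1
      gcongr
      exact hUbound a ha.1 ha.2
    exact squeeze_zero' hev1 hev2 hub
  have : Tendsto (fun a : ℝ => 1 - U a / Real.Gamma a) (nhdsWithin 0 (Set.Ioi 0)) (nhds 1) := by
    have := tendsto_const_nhds.sub hdiv (f := fun _ : ℝ => (1:ℝ))
    simpa using this
  refine this.congr' ?_
  filter_upwards [self_mem_nhdsWithin] with a (ha : 0 < a)
  rw [hsplit a ha, sub_div, div_self (Real.Gamma_pos_of_pos ha).ne', sub_right_inj]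

theorem caputo_exp_limit (r s : ℝ) (hr : 0 < r) (hs : 0 < s) :
    Filter.Tendsto
      (fun β : ℝ => r ^ β *
        (∫ t in (0:ℝ)..(r * s), t ^ ((1 - β) - 1) * Real.exp (-t)) / Real.Gamma (1 - β))
      (nhdsWithin 1 (Set.Iio 1)) (nhds r) := by
  have hx : 0 < r * s := mul_pos hr hs
  have hmap : Tendsto (fun β : ℝ => 1 - β) (nhdsWithin 1 (Set.Iio 1))
      (nhdsWithin 0 (Set.Ioi 0)) := by
    apply tendsto_nhdsWithin_of_tendsto_nhds_of_eventually_within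
    · have hcont : Continuous (fun β : ℝ => 1 - β) := by fun_prop
      have : Tendsto (fun β : ℝ => 1 - β) (nhds 1) (nhds 0) := by
        simpa using hcont.tendsto 1
      exact this.mono_left nhdsWithin_le_nhds
    · filter_upwards [self_mem_nhdsWithin] with β (hβ : β < 1)
      simp only [Set.mem_Ioi]; linarith
  have h1 : Tendsto (fun β : ℝ => r ^ β) (nhdsWithin 1 (Set.Iio 1)) (nhds r) := by
    have := (Real.continuousAt_const_rpow (a := r) (b := 1) hr.ne').tendsto
    rw [Real.rpow_one] at this
    exact this.mono_left nhdsWithin_le_nhds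
  have h2 := (ratio_tendsto (r * s) hx).comp hmap
  have := h1.mul h2
  rw [mul_one] at this
  refine this.congr (fun β => ?_)
  simp [Function.comp, mul_div_assoc]
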